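/- Let σ : ℝ^d → ℝ be L-Lipschitz and differentiable almost everywhere, and let Z be uniformly distributed on the cube [−c/2, c/2]^d with c > 0. Then σ̄(x) := E[σ(x + Z)] is differentiable with ∇σ̄(x) = E[∇σ(x + Z)], and ∇σ̄ is Lipschitz continuous with constant 2√d·L/c. -/

import Mathlib

open MeasureTheory

section helpers
variable {d : ℕ}

private lemma vol_pi_set' (A : Fin d → Set ℝ) (hA : ∀ i, MeasurableSet (A i)) :
    volume {z : EuclideanSpace ℝ (Fin d) | ∀ i, z i ∈ A i} = ∏ i, volume (A i) := by
  have h := (EuclideanSpace.volume_preserving_symm_measurableEquiv_toLp (ι := Fin d)).measure_preimage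
    (s := Set.univ.pi A) ((MeasurableSet.univ_pi fun i => hA i).nullMeasurableSet)
  have hpre : (⇑(MeasurableEquiv.toLp 2 (Fin d → ℝ)).symm) ⁻¹' (Set.univ.pi A)
      = {z : EuclideanSpace ℝ (Fin d) | ∀ i, z i ∈ A i} := by
    ext z; simp [Set.mem_pi]
  rw [hpre] at h
  rw [h, volume_pi_pi]

private lemma vol_Icc_diff' (a b c : ℝ) :
    volume (Set.Icc (a - c/2) (a + c/2) \ Set.Icc (b - c/2) (b + c/2))
      ≤ ENNReal.ofReal |a - b| := by
  rcases le_total a b with h | h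
  · have : Set.Icc (a - c/2) (a + c/2) \ Set.Icc (b - c/2) (b + c/2)
        ⊆ Set.Ico (a - c/2) (b - c/2) := by
      rintro t ⟨⟨h1, h2⟩, h3⟩
      refine ⟨h1, ?_⟩
      by_contra hlt
      exact h3 ⟨not_lt.1 hlt, h2.trans (by linarith)⟩
    calc volume _ ≤ volume (Set.Ico (a - c/2) (b - c/2)) := measure_mono this
    _ = ENNReal.ofReal ((b - c/2) - (a - c/2)) := Real.volume_Ico
    _ = ENNReal.ofReal |a - b| := by rw [abs_sub_comm, abs_of_nonneg (by linarith)]; ring_nf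
  · have : Set.Icc (a - c/2) (a + c/2) \ Set.Icc (b - c/2) (b + c/2)
        ⊆ Set.Ioc (b + c/2) (a + c/2) := by
      rintro t ⟨⟨h1, h2⟩, h3⟩
      refine ⟨?_, h2⟩
      by_contra hlt
      exact h3 ⟨h1.trans' (by linarith), not_lt.1 hlt⟩
    calc volume _ ≤ volume (Set.Ioc (b + c/2) (a + c/2)) := measure_mono this
    _ = ENNReal.ofReal ((a + c/2) - (b + c/2)) := Real.volume_Ioc
    _ = ENNReal.ofReal |a - b| := by rw [abs_of_nonneg (by linarith)]; ring_nf

private lemma vol_cube_diff' (x y : EuclideanSpace ℝ (Fin d)) {c : ℝ} (hc : 0 < c) :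
    volume ({w : EuclideanSpace ℝ (Fin d) | ∀ i, w i ∈ Set.Icc (x i - c/2) (x i + c/2)} \
            {w : EuclideanSpace ℝ (Fin d) | ∀ i, w i ∈ Set.Icc (y i - c/2) (y i + c/2)})
      ≤ (∑ i, ENNReal.ofReal |x i - y i|) * (ENNReal.ofReal c) ^ (d - 1) := by
  set T : Fin d → Set (EuclideanSpace ℝ (Fin d)) := fun i =>
    {w | ∀ j, w j ∈ (if j = i then Set.Icc (x i - c/2) (x i + c/2) \ Set.Icc (y i - c/2) (y i + c/2)
      else Set.Icc (x j - c/2) (x j + c/2))}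
  have hsub : ({w : EuclideanSpace ℝ (Fin d) | ∀ i, w i ∈ Set.Icc (x i - c/2) (x i + c/2)} \
      {w : EuclideanSpace ℝ (Fin d) | ∀ i, w i ∈ Set.Icc (y i - c/2) (y i + c/2)}) ⊆ ⋃ i, T i := by
    rintro w ⟨h1, h2⟩
    simp only [Set.mem_setOf_eq, not_forall] at h2
    obtain ⟨i, hi⟩ := h2
    refine Set.mem_iUnion.2 ⟨i, fun j => ?_⟩
    by_cases hj : j = i
    · subst hj; simp only [if_pos rfl]; exact ⟨h1 j, hi⟩
    · simp only [if_neg hj]; exact h1 j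
  refine (measure_mono hsub).trans ((measure_iUnion_le T).trans ?_)
  rw [tsum_fintype, Finset.sum_mul]
  refine Finset.sum_le_sum fun i _ => ?_
  have hTi : volume (T i) = ∏ j, volume (if j = i then
      Set.Icc (x i - c/2) (x i + c/2) \ Set.Icc (y i - c/2) (y i + c/2)
      else Set.Icc (x j - c/2) (x j + c/2)) := by
    refine vol_pi_set' _ fun j => ?_
    split
    · exact measurableSet_Icc.diff measurableSet_Icc
    · exact measurableSet_Icc
  rw [hTi, ← Finset.mul_prod_erase Finset.univ _ (Finset.mem_univ i)]
  simp only [if_pos rfl]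
  refine mul_le_mul' (vol_Icc_diff' _ _ _) ?_
  calc ∏ j ∈ Finset.univ.erase i, volume (if j = i then
        Set.Icc (x i - c/2) (x i + c/2) \ Set.Icc (y i - c/2) (y i + c/2)
        else Set.Icc (x j - c/2) (x j + c/2))
      ≤ ∏ j ∈ Finset.univ.erase i, ENNReal.ofReal c := by
        refine Finset.prod_le_prod' fun j hj => ?_
        rw [if_neg (Finset.ne_of_mem_erase hj)]
        rw [Real.volume_Icc]
        exact ENNReal.ofReal_le_ofReal (by linarith)
    _ = (ENNReal.ofReal c) ^ (d - 1) := by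
        rw [Finset.prod_const, Finset.card_erase_of_mem (Finset.mem_univ i), Finset.card_univ,
          Fintype.card_fin]

private lemma sum_abs_le' (x : EuclideanSpace ℝ (Fin d)) : ∑ i, |x i| ≤ Real.sqrt d * ‖x‖ := by
  have h := sq_sum_le_card_mul_sum_sq (s := Finset.univ) (f := fun i => |x i|)
  simp only [Finset.card_univ, Fintype.card_fin, sq_abs] at h
  have h1 : ∑ i, |x i| = Real.sqrt ((∑ i, |x i|) ^ 2) := by
    rw [Real.sqrt_sq (Finset.sum_nonneg fun i _ => abs_nonneg _)]
  rw [h1]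
  calc Real.sqrt ((∑ i, |x i|) ^ 2) ≤ Real.sqrt (d * ∑ i, (x i)^2) :=
        Real.sqrt_le_sqrt (by exact_mod_cast h)
    _ = Real.sqrt d * ‖x‖ := by
        rw [EuclideanSpace.norm_eq, Real.sqrt_mul (Nat.cast_nonneg d)]
        norm_num [sq_abs]

end helpers

theorem stmt6 {d : ℕ} (hd : 1 ≤ d) (σ : EuclideanSpace ℝ (Fin d) → ℝ) (L c : ℝ)
    (hL : 0 ≤ L) (hc : 0 < c)
    (hlip : LipschitzWith (Real.toNNReal L) σ)
    (hdiff : ∀ᵐ z ∂(volume : Measure (EuclideanSpace ℝ (Fin d))), DifferentiableAt ℝ σ z)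
    (μZ : Measure (EuclideanSpace ℝ (Fin d)))
    (hμZ : μZ = (ENNReal.ofReal (c ^ d))⁻¹ •
      (volume.restrict {z : EuclideanSpace ℝ (Fin d) | ∀ i, z i ∈ Set.Icc (-(c / 2)) (c / 2)}))
    (sbar : EuclideanSpace ℝ (Fin d) → ℝ)
    (hsbar : ∀ x, sbar x = ∫ z, σ (x + z) ∂μZ) :
    (∀ x, HasGradientAt sbar (∫ z, gradient σ (x + z) ∂μZ) x) ∧
      LipschitzWith (Real.toNNReal (2 * Real.sqrt d * L / c)) (fun x => gradient sbar x) := by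
  set Q : Set (EuclideanSpace ℝ (Fin d)) :=
    {z : EuclideanSpace ℝ (Fin d) | ∀ i, z i ∈ Set.Icc (-(c / 2)) (c / 2)} with hQdef
  have hσc : Continuous σ := hlip.continuous
  have hcd : (0:ℝ) < c ^ d := pow_pos hc d
  have hne0 : ENNReal.ofReal (c ^ d) ≠ 0 := by
    simp [ENNReal.ofReal_eq_zero, not_le, hcd]
  have hneT : ENNReal.ofReal (c ^ d) ≠ ⊤ := ENNReal.ofReal_ne_top
  -- volume of Q
  have hQvol : volume Q = ENNReal.ofReal (c ^ d) := by
    rw [hQdef]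
    rw [vol_pi_set' (fun _ => Set.Icc (-(c/2)) (c/2)) (fun _ => measurableSet_Icc)]
    simp only [Real.volume_Icc]
    rw [Finset.prod_const, Finset.card_univ, Fintype.card_fin,
      show c / 2 - -(c / 2) = c by ring]
    exact (ENNReal.ofReal_pow hc.le d).symm
  have hQclosed : IsClosed Q := by
    have : Q = ⋂ i, (fun z : EuclideanSpace ℝ (Fin d) => z i) ⁻¹' Set.Icc (-(c/2)) (c/2) := by
      ext z; simp [hQdef]
    rw [this]
    exact isClosed_iInter fun i =>
      (isClosed_Icc).preimage (EuclideanSpace.proj (𝕜 := ℝ) i).continuous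
  have hQmeas : MeasurableSet Q := hQclosed.measurableSet
  -- μZ is a finite measure
  haveI : IsFiniteMeasure μZ := by
    refine ⟨?_⟩
    rw [hμZ]
    simp only [Measure.smul_apply, Measure.restrict_apply MeasurableSet.univ, Set.univ_inter,
      smul_eq_mul]
    rw [hQvol]
    rw [ENNReal.inv_mul_cancel hne0 hneT]
    exact ENNReal.one_lt_top
  have habs : μZ ≪ (volume : Measure (EuclideanSpace ℝ (Fin d))) := by
    rw [hμZ]
    exact (Measure.absolutelyContinuous_of_le Measure.restrict_le_self).smul_left _
  -- integrability of translates of σ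
  have hQcompact : IsCompact Q := by
    refine Metric.isCompact_of_isClosed_isBounded hQclosed ?_
    refine (Metric.isBounded_closedBall (x := (0 : EuclideanSpace ℝ (Fin d))) (r := Real.sqrt d * c)).subset ?_
    intro z hz
    rw [Metric.mem_closedBall, dist_zero_right]
    have hnorm : ‖z‖ ≤ Real.sqrt d * c := by
      rw [EuclideanSpace.norm_eq]
      have h1 : ∀ i, ‖z i‖ ^ 2 ≤ c ^ 2 := by
        intro i
        have := hz i
        rw [Real.norm_eq_abs, sq_abs]
        nlinarith [this.1, this.2, hc.le]
      calc Real.sqrt (∑ i, ‖z i‖ ^ 2) ≤ Real.sqrt (∑ _i : Fin d, c ^ 2) :=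
            Real.sqrt_le_sqrt (Finset.sum_le_sum fun i _ => h1 i)
        _ = Real.sqrt d * c := by
            rw [Finset.sum_const, Finset.card_univ, Fintype.card_fin, nsmul_eq_mul,
              Real.sqrt_mul (Nat.cast_nonneg d), Real.sqrt_sq hc.le]
    exact hnorm
  have hint : ∀ x : EuclideanSpace ℝ (Fin d), Integrable (fun z => σ (x + z)) μZ := by
    intro x
    rw [hμZ]
    rw [integrable_smul_measure (by simpa using hneT) (by simpa using hne0)]
    have hcont : Continuous fun z : EuclideanSpace ℝ (Fin d) => σ (x + z) := by fun_prop
    exact hcont.continuousOn.integrableOn_compact hQcompact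
  -- Part 1 : differentiation under the integral sign
  have key : ∀ x₀ : EuclideanSpace ℝ (Fin d), Integrable (fun z => fderiv ℝ σ (x₀ + z)) μZ ∧
      HasFDerivAt (fun x => ∫ z, σ (x + z) ∂μZ) (∫ z, fderiv ℝ σ (x₀ + z) ∂μZ) x₀ := by
    intro x₀
    apply hasFDerivAt_integral_of_dominated_loc_of_lip (bound := fun _ => L) Filter.univ_mem
    · refine Filter.Eventually.of_forall fun x => ?_
      have hcont : Continuous fun z : EuclideanSpace ℝ (Fin d) => σ (x + z) := by fun_prop
      exact hcont.aestronglyMeasurable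
    · exact hint x₀
    · exact ((measurable_fderiv ℝ σ).comp (measurable_const_add x₀)).aestronglyMeasurable
    · refine Filter.Eventually.of_forall fun z => ?_
      have h1 : LipschitzWith (Real.toNNReal L) (fun x : EuclideanSpace ℝ (Fin d) => σ (x + z)) := by
        have := hlip.comp (isometry_add_right z).lipschitz
        simpa [Function.comp_def] using this
      rw [Real.nnabs_of_nonneg hL]
      exact fun u _ v _ => h1 u v
    · exact integrable_const L
    · have h1 : ∀ᵐ z ∂(volume : Measure (EuclideanSpace ℝ (Fin d))), DifferentiableAt ℝ σ (x₀ + z) :=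
        (measurePreserving_add_left volume x₀).quasiMeasurePreserving.ae hdiff
      filter_upwards [habs.ae_le h1] with z hz
      have h2 := hz.hasFDerivAt.comp x₀ ((hasFDerivAt_id x₀).add_const z)
      simpa [Function.comp_def] using h2
  -- gradient form of part 1
  have hgradfd : ∀ y : EuclideanSpace ℝ (Fin d), gradient σ y = (InnerProductSpace.toDual ℝ (EuclideanSpace ℝ (Fin d))).symm (fderiv ℝ σ y) :=
    fun y => rfl
  have part1 : ∀ x, HasGradientAt sbar (∫ z, gradient σ (x + z) ∂μZ) x := by
    intro x
    have h2 : HasFDerivAt sbar (∫ z, fderiv ℝ σ (x + z) ∂μZ) x := by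
      have h := (key x).2
      have : sbar = fun x => ∫ z, σ (x + z) ∂μZ := funext hsbar
      rw [this]
      exact h
    have h3 : (∫ z, gradient σ (x + z) ∂μZ)
        = (InnerProductSpace.toDual ℝ (EuclideanSpace ℝ (Fin d))).symm (∫ z, fderiv ℝ σ (x + z) ∂μZ) := by
      have := ((InnerProductSpace.toDual ℝ (EuclideanSpace ℝ (Fin d))).symm.toContinuousLinearEquiv.toContinuousLinearMap).integral_comp_comm (key x).1
      simp only [ContinuousLinearEquiv.coe_coe, LinearIsometryEquiv.coe_toContinuousLinearEquiv] at this
      rw [← this]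
      rfl
    rw [h3]
    exact h2.hasGradientAt
  refine ⟨part1, ?_⟩
  -- Part 2 : Lipschitz bound on the gradient
  have hgrad : ∀ x, gradient sbar x = ∫ z, gradient σ (x + z) ∂μZ :=
    fun x => (part1 x).gradient
  have hKnonneg : 0 ≤ 2 * Real.sqrt d * L / c :=
    div_nonneg (by positivity) hc.le
  refine LipschitzWith.of_dist_le_mul fun x y => ?_
  rw [Real.coe_toNNReal _ hKnonneg, dist_eq_norm]
  show ‖gradient sbar x - gradient sbar y‖ ≤ _
  rw [hgrad x, hgrad y]
  -- gradient is bounded by L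
  have hgbound : ∀ w : EuclideanSpace ℝ (Fin d), ‖gradient σ w‖ ≤ L := by
    intro w
    rw [hgradfd, LinearIsometryEquiv.norm_map]
    have := norm_fderiv_le_of_lipschitz ℝ (x₀ := w) hlip
    rwa [Real.coe_toNNReal _ hL] at this
  have hgmeas : Measurable (gradient σ) := by
    have : Measurable (fderiv ℝ σ) := measurable_fderiv ℝ σ
    exact ((InnerProductSpace.toDual ℝ (EuclideanSpace ℝ (Fin d))).symm.continuous.measurable).comp this
  -- translated cubes
  set Qt : EuclideanSpace ℝ (Fin d) → Set (EuclideanSpace ℝ (Fin d)) := fun x => {w : EuclideanSpace ℝ (Fin d) | ∀ i, w i ∈ Set.Icc (x i - c/2) (x i + c/2)} with hQt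
  have hQtim : ∀ x : EuclideanSpace ℝ (Fin d), (fun z => x + z) '' Q = Qt x := by
    intro x
    ext w
    simp only [Set.mem_image, hQt, Set.mem_setOf_eq]
    constructor
    · rintro ⟨z, hz, rfl⟩ i
      have h := hz i
      simp only [Set.mem_Icc] at h ⊢
      have hxz : (x + z) i = x i + z i := rfl
      rw [hxz]
      constructor <;> linarith [h.1, h.2]
    · intro hw
      refine ⟨w - x, fun i => ?_, by abel⟩
      have h := hw i
      simp only [Set.mem_Icc] at h ⊢
      have hwx : (w - x) i = w i - x i := rfl
      rw [hwx]
      constructor <;> linarith [h.1, h.2]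
  have hQtmeas : ∀ v : EuclideanSpace ℝ (Fin d), MeasurableSet (Qt v) := by
    intro v
    have hset : Qt v = ⋂ i, (fun z : EuclideanSpace ℝ (Fin d) => z i) ⁻¹'
        Set.Icc (v i - c/2) (v i + c/2) := by
      ext z; simp [hQt]
    rw [hset]
    exact MeasurableSet.iInter fun i => measurableSet_Icc.preimage
      ((EuclideanSpace.proj (𝕜 := ℝ) i).continuous.measurable)
  have hQtvol : ∀ v : EuclideanSpace ℝ (Fin d), volume (Qt v) = ENNReal.ofReal (c ^ d) := by
    intro v
    rw [hQt]
    rw [vol_pi_set' (fun i => Set.Icc (v i - c/2) (v i + c/2)) (fun _ => measurableSet_Icc)]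
    simp only [Real.volume_Icc]
    rw [Finset.prod_congr rfl (fun i _ => by rw [show v i + c/2 - (v i - c/2) = c by ring])]
    rw [Finset.prod_const, Finset.card_univ, Fintype.card_fin, ← ENNReal.ofReal_pow hc.le]
  have hsmul : ∀ v : EuclideanSpace ℝ (Fin d),
      ∫ z, gradient σ (v + z) ∂μZ = (c ^ d)⁻¹ • ∫ w in Qt v, gradient σ w := by
    intro v
    rw [hμZ, integral_smul_measure]
    congr 1
    · rw [ENNReal.toReal_inv, ENNReal.toReal_ofReal hcd.le]
    · have hmp : MeasurePreserving (fun z : EuclideanSpace ℝ (Fin d) => v + z)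
          (volume : Measure (EuclideanSpace ℝ (Fin d))) volume :=
        measurePreserving_add_left volume v
      have hemb : MeasurableEmbedding (fun z : EuclideanSpace ℝ (Fin d) => v + z) :=
        (MeasurableEquiv.addLeft v).measurableEmbedding
      rw [← hQtim v]
      exact (hmp.setIntegral_image_emb hemb (gradient σ) Q).symm
  have hgint : ∀ v : EuclideanSpace ℝ (Fin d), IntegrableOn (gradient σ) (Qt v) volume := by
    intro v
    refine Integrable.mono' (integrableOn_const ?_)
      (hgmeas.aestronglyMeasurable.restrict)
      (Filter.Eventually.of_forall fun w => hgbound w)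
    rw [hQtvol v]; exact ENNReal.ofReal_ne_top
  have hdecomp : (∫ w in Qt x, gradient σ w) - ∫ w in Qt y, gradient σ w
      = (∫ w in Qt x \ Qt y, gradient σ w) - ∫ w in Qt y \ Qt x, gradient σ w := by
    have h1 := integral_inter_add_diff (hQtmeas y) (hgint x)
    have h2 := integral_inter_add_diff (hQtmeas x) (hgint y)
    rw [Set.inter_comm] at h2
    rw [← h1, ← h2]
    abel
  have hbound : ∀ v w : EuclideanSpace ℝ (Fin d),
      ‖∫ u in Qt v \ Qt w, gradient σ u‖ ≤ L * ((∑ i, |v i - w i|) * c ^ (d-1)) := by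
    intro v w
    have hfin : volume (Qt v \ Qt w) < ⊤ :=
      (measure_mono Set.diff_subset).trans_lt (by rw [hQtvol v]; exact ENNReal.ofReal_lt_top)
    have h1 : ‖∫ u in Qt v \ Qt w, gradient σ u‖ ≤ L * (volume (Qt v \ Qt w)).toReal :=
      norm_setIntegral_le_of_norm_le_const hfin (fun u _ => hgbound u)
    refine h1.trans (mul_le_mul_of_nonneg_left ?_ hL)
    have h2 := vol_cube_diff' v w hc
    have h3 : ((∑ i, ENNReal.ofReal |v i - w i|) * (ENNReal.ofReal c) ^ (d-1))
        = ENNReal.ofReal ((∑ i, |v i - w i|) * c ^ (d-1)) := by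
      rw [← ENNReal.ofReal_sum_of_nonneg (fun i _ => abs_nonneg _), ← ENNReal.ofReal_pow hc.le,
        ← ENNReal.ofReal_mul (Finset.sum_nonneg fun i _ => abs_nonneg _)]
    rw [h3] at h2
    calc (volume (Qt v \ Qt w)).toReal
        ≤ (ENNReal.ofReal ((∑ i, |v i - w i|) * c ^ (d-1))).toReal :=
          ENNReal.toReal_mono ENNReal.ofReal_ne_top h2
      _ ≤ (∑ i, |v i - w i|) * c ^ (d-1) := by
          rw [ENNReal.toReal_ofReal (by positivity)]
  have hSle : (∑ i, |x i - y i|) ≤ Real.sqrt d * ‖x - y‖ := by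
    have h := sum_abs_le' (x - y)
    simpa [PiLp.sub_apply] using h
  rw [dist_eq_norm x y, hsmul x, hsmul y, ← smul_sub, hdecomp, norm_smul,
    Real.norm_eq_abs, abs_of_nonneg (inv_nonneg.2 hcd.le)]
  have hnorm1 : ‖(∫ w in Qt x \ Qt y, gradient σ w) - ∫ w in Qt y \ Qt x, gradient σ w‖
      ≤ 2 * L * ((∑ i, |x i - y i|) * c ^ (d-1)) := by
    calc ‖(∫ w in Qt x \ Qt y, gradient σ w) - ∫ w in Qt y \ Qt x, gradient σ w‖
        ≤ ‖∫ w in Qt x \ Qt y, gradient σ w‖ + ‖∫ w in Qt y \ Qt x, gradient σ w‖ :=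
          norm_sub_le _ _
      _ ≤ L * ((∑ i, |x i - y i|) * c ^ (d-1)) + L * ((∑ i, |y i - x i|) * c ^ (d-1)) :=
          add_le_add (hbound x y) (hbound y x)
      _ = 2 * L * ((∑ i, |x i - y i|) * c ^ (d-1)) := by
          simp only [abs_sub_comm]
          ring
  have hcd1 : c ^ d = c ^ (d - 1) * c := by
    rw [← pow_succ]
    congr 1
    omega
  calc (c ^ d)⁻¹ * ‖(∫ w in Qt x \ Qt y, gradient σ w) - ∫ w in Qt y \ Qt x, gradient σ w‖
      ≤ (c ^ d)⁻¹ * (2 * L * ((∑ i, |x i - y i|) * c ^ (d-1))) :=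
        mul_le_mul_of_nonneg_left hnorm1 (inv_nonneg.2 hcd.le)
    _ = 2 * L * (∑ i, |x i - y i|) / c := by
        rw [hcd1]
        have hcne : c ≠ 0 := hc.ne'
        have hcd1ne : c ^ (d - 1) ≠ 0 := pow_ne_zero _ hcne
        field_simp
    _ ≤ 2 * L * (Real.sqrt d * ‖x - y‖) / c := by
        gcongr
    _ = 2 * Real.sqrt d * L / c * ‖x - y‖ := by ring
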